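/- For the (2,1) random walk Y on ℤ₊ with transition probabilities P(n → n+1) = q_n, P(n → n−2) = p_n = 1 − q_n for n ≥ 2 (and deterministic steps 0 → 1 → 2), set N_k = [[θ_k, θ_k], [1, 0]] with θ_k = p_k/q_k. Then for 0 < m ≤ k ≤ n, the probability that Y started from k hits [0, m] before hitting [n, ∞) equals (∑_{s=k}^{n−1} e₁ N_s⋯N_{m+1} e₁^t) / (1 + ∑_{s=m+1}^{n−1} e₁ N_s⋯N_{m+1} e₁^t), where e₁ = (1,0) and an empty matrix product is the identity. -/

import Mathlib

open Matrix Filter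

/-- Product `N s * N (s-1) * ⋯ * N (m+1)`, equal to the identity when `s ≤ m`. -/
noncomputable def matProdDesc (N : ℕ → Matrix (Fin 2) (Fin 2) ℝ) (m : ℕ) :
    ℕ → Matrix (Fin 2) (Fin 2) ℝ
  | 0 => 1
  | (s+1) => if s + 1 ≤ m then 1 else N (s+1) * matProdDesc N m s

lemma matProdDesc_of_le (N : ℕ → Matrix (Fin 2) (Fin 2) ℝ) (m s : ℕ) (hs : s ≤ m) :
    matProdDesc N m s = 1 := by
  cases s with
  | zero => rfl
  | succ s => simp [matProdDesc, hs]

lemma matProdDesc_nonneg (θ : ℕ → ℝ) (hθ0 : ∀ j, 0 ≤ θ j)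
    (N : ℕ → Matrix (Fin 2) (Fin 2) ℝ) (hN : ∀ k, N k = !![θ k, θ k; 1, 0]) (m : ℕ) :
    ∀ s i j, 0 ≤ matProdDesc N m s i j := by
  intro s
  induction s with
  | zero =>
    intro i j
    simp only [matProdDesc, Matrix.one_apply]
    split <;> norm_num
  | succ s ih =>
    intro i j
    rw [matProdDesc]
    split
    · simp only [Matrix.one_apply]; split <;> norm_num
    · rw [Matrix.mul_apply]
      apply Finset.sum_nonneg
      intro x _
      apply mul_nonneg _ (ih x j)
      fin_cases i <;> fin_cases x <;> simp [hN] <;> first | exact hθ0 _ | norm_num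

theorem hitting_probability_formula (q p θ : ℕ → ℝ)
    (hq : ∀ j, 0 < q j ∧ q j < 1) (hp : ∀ j, p j = 1 - q j)
    (hθ : ∀ k, θ k = p k / q k)
    (N : ℕ → Matrix (Fin 2) (Fin 2) ℝ) (hN : ∀ k, N k = !![θ k, θ k; 1, 0])
    (m k n : ℕ) (hm : 0 < m) (hmk : m ≤ k) (hkn : k ≤ n)
    (h : ℕ → ℝ)
    (hbm : h m = 1) (hbm1 : h (m-1) = 1) (hbn : h n = 0)
    (hharm : ∀ j, m + 1 ≤ j → j ≤ n - 1 → h j = q j * h (j+1) + p j * h (j-2)) :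
    h k = (∑ s ∈ Finset.Icc k (n-1), (matProdDesc N m s) 0 0) /
      (1 + ∑ s ∈ Finset.Icc (m+1) (n-1), (matProdDesc N m s) 0 0) := by
  have hθ0 : ∀ j, 0 ≤ θ j := by
    intro j
    rw [hθ, hp]
    exact div_nonneg (by linarith [(hq j).2]) (hq j).1.le
  by_cases hmn : m = n
  · exfalso; rw [hmn, hbn] at hbm; norm_num at hbm
  have hmn' : m < n := lt_of_le_of_ne (hmk.trans hkn) hmn
  set d : ℕ → ℝ := fun s => h s - h (s+1) with hd
  set c : ℝ := 1 - h (m+1) with hc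
  -- recurrence
  have hrec : ∀ j, m + 1 ≤ j → j ≤ n - 1 → d j = θ j * (d (j-1) + d (j-2)) := by
    intro j hj1 hj2
    have e := hharm j hj1 hj2
    have h1 : j - 1 + 1 = j := by omega
    have h2 : j - 2 + 1 = j - 1 := by omega
    have hpj := hp j
    have hqj := (hq j).1
    rw [hθ]
    simp only [hd, h1, h2]
    rw [hpj] at e ⊢
    field_simp
    nlinarith [e]
  have key : ∀ s, m ≤ s → s ≤ n - 1 →
      d s = matProdDesc N m s 0 0 * c ∧ d (s-1) = matProdDesc N m s 1 0 * c := by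
    intro s
    induction s with
    | zero => intro h1 h2; omega
    | succ s ih =>
      intro h1 h2
      rcases eq_or_lt_of_le h1 with heq | hlt
      · rw [matProdDesc_of_le _ _ _ (le_of_eq heq.symm)]
        simp only [Matrix.one_apply_eq, one_mul]
        have h10 : (1 : Matrix (Fin 2) (Fin 2) ℝ) 1 0 = 0 := by
          simp [Matrix.one_apply]
        rw [h10, zero_mul]
        constructor
        · simp only [hd, hc, ← heq, hbm]
        · have hms : s + 1 - 1 = m - 1 := by omega
          have hm1 : m - 1 + 1 = m := by omega
          simp only [hd, hms, hm1, hbm1, hbm, sub_self]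
      · have hs : m ≤ s := by omega
        have hsn : s ≤ n - 1 := by omega
        obtain ⟨ih1, ih2⟩ := ih hs hsn
        have hr := hrec (s+1) (by omega) h2
        have e1 : s + 1 - 1 = s := by omega
        have e2 : s + 1 - 2 = s - 1 := by omega
        rw [e1, e2] at hr
        rw [matProdDesc, if_neg (by omega)]
        constructor
        · rw [hN, Matrix.mul_apply, Fin.sum_univ_two]
          norm_num
          rw [hr, ih1, ih2]
          ring
        · rw [e1, hN, Matrix.mul_apply, Fin.sum_univ_two]
          norm_num
          rw [ih1]
  have hsum : ∀ i, i ≤ n - m → h (n - i) = (∑ s ∈ Finset.Icc (n-i) (n-1), matProdDesc N m s 0 0) * c := by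
    intro i
    induction i with
    | zero =>
      intro _
      rw [Nat.sub_zero, Finset.Icc_eq_empty (by omega), Finset.sum_empty, zero_mul, hbn]
    | succ i ih =>
      intro hi
      have h1 : m ≤ n - (i+1) := by omega
      have h2 : n - (i+1) ≤ n - 1 := by omega
      have h3 : n - (i+1) + 1 = n - i := by omega
      have hins : Finset.Icc (n-(i+1)) (n-1) = insert (n-(i+1)) (Finset.Icc (n-i) (n-1)) := by
        ext x; simp only [Finset.mem_Icc, Finset.mem_insert]; omega
      rw [hins, Finset.sum_insert (by simp only [Finset.mem_Icc]; omega)]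
      have hk := (key (n-(i+1)) h1 h2).1
      have hsplit : h (n-(i+1)) = d (n-(i+1)) + h (n-i) := by
        simp only [hd, h3]; ring
      rw [hsplit, hk, ih (by omega)]
      ring
  set S : ℝ := ∑ s ∈ Finset.Icc (m+1) (n-1), matProdDesc N m s 0 0 with hS
  have hSm : (∑ s ∈ Finset.Icc m (n-1), matProdDesc N m s 0 0) = 1 + S := by
    have hins : Finset.Icc m (n-1) = insert m (Finset.Icc (m+1) (n-1)) := by
      ext x; simp only [Finset.mem_Icc, Finset.mem_insert]; omega
    rw [hins, Finset.sum_insert (by simp only [Finset.mem_Icc]; omega)]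
    rw [matProdDesc_of_le _ _ _ le_rfl, Matrix.one_apply_eq]
  have hSnn : 0 ≤ S := by
    apply Finset.sum_nonneg
    intro s _
    exact matProdDesc_nonneg θ hθ0 N hN m s 0 0
  have hSpos : (0:ℝ) < 1 + S := by linarith
  have hc1 : 1 = (1 + S) * c := by
    have := hsum (n - m) le_rfl
    rw [show n - (n-m) = m by omega, hbm, hSm] at this
    exact this
  have hck : h k = (∑ s ∈ Finset.Icc k (n-1), matProdDesc N m s 0 0) * c := by
    have := hsum (n - k) (by omega)
    rwa [show n - (n-k) = k by omega] at this
  rw [hck, eq_div_iff hSpos.ne', mul_assoc, mul_comm c, ← hc1, mul_one]
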